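/- Let k ≥ 5 be an integer and let H be a weighted graph with edge weights ω: E(H) → {3,4,5}. If H contains no cycle of odd total weight smaller than 2k+1, then for every vertex u of H the set N_ω^{k-3}[u] of vertices at weighted distance at most k−3 from u induces a weighted bipartite subgraph of H. -/
import Mathlib

open SimpleGraph

/-- The total weight of a walk: the sum of the weights of its edges. -/
def SimpleGraph.Walk.wt {V : Type*} {G : SimpleGraph V} {u v : V}
    (ω : Sym2 V → ℕ) (w : G.Walk u v) : ℕ :=
  (w.edges.map ω).sum

/-- The induced subgraph on `B` is weighted bipartite:
it contains no cycle of odd total weight. -/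
def weightedBipartiteOn {V : Type*} (G : SimpleGraph V) (ω : Sym2 V → ℕ)
    (B : Set V) : Prop :=
  ∀ ⦃v : V⦄ (c : G.Walk v v), c.IsCycle → (∀ x ∈ c.support, x ∈ B) → ¬ Odd (c.wt ω)

/-- `closedNbhd G i B` is the set of vertices at (unweighted) graph distance
at most `i` from the set `B`. -/
def closedNbhd {V : Type*} (G : SimpleGraph V) (i : ℕ) (B : Set V) : Set V :=
  {x | ∃ b ∈ B, ∃ w : G.Walk b x, w.length ≤ i}

/-- `wBall G ω u i` is the set of vertices at weighted distance at most `i` from `u`. -/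
def wBall {V : Type*} (G : SimpleGraph V) (ω : Sym2 V → ℕ) (u : V) (i : ℕ) : Set V :=
  {x | ∃ w : G.Walk u x, w.IsPath ∧ w.wt ω ≤ i}

section aux

variable {V : Type*} {G : SimpleGraph V} (ω : Sym2 V → ℕ)

lemma wt_nil {x : V} : (Walk.nil : G.Walk x x).wt ω = 0 := rfl

lemma wt_cons {x y z : V} (h : G.Adj x y) (p : G.Walk y z) :
    (Walk.cons h p).wt ω = ω s(x, y) + p.wt ω := by
  simp [Walk.wt]

lemma wt_append {x y z : V} (p : G.Walk x y) (q : G.Walk y z) :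
    (p.append q).wt ω = p.wt ω + q.wt ω := by
  simp [Walk.wt, Walk.edges_append]

lemma wt_reverse {x y : V} (p : G.Walk x y) :
    p.reverse.wt ω = p.wt ω := by
  simp [Walk.wt, Walk.edges_reverse, List.map_reverse, List.sum_reverse]

lemma wt_take_add_drop [DecidableEq V] {x y z : V} (p : G.Walk x y) (h : z ∈ p.support) :
    (p.takeUntil z h).wt ω + (p.dropUntil z h).wt ω = p.wt ω := by
  conv_rhs => rw [← p.take_spec h]
  rw [wt_append]

/-- Any closed walk of odd weight contains a cycle of odd weight at most the
weight of the walk. -/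
lemma exists_odd_cycle :
    ∀ (n : ℕ) {x : V} (w : G.Walk x x), w.length ≤ n → Odd (w.wt ω) →
      ∃ (y : V) (c : G.Walk y y), c.IsCycle ∧ Odd (c.wt ω) ∧ c.wt ω ≤ w.wt ω := by
  classical
  intro n
  induction n with
  | zero =>
    intro x w hl hodd
    cases w with
    | nil => simp [Walk.wt] at hodd
    | cons h p => simp at hl
  | succ n ih =>
    intro x w hl hodd
    cases w with
    | nil => simp [Walk.wt] at hodd
    | cons h p =>
      rename_i b
      -- h : G.Adj x b, p : G.Walk b x
      by_cases hp : p.IsPath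
      · by_cases he : s(x, b) ∈ p.edges
        · -- backtracking: the last edge of `p` is `s(x,b)`
          have hpl : 0 < p.length := by
            by_contra h0
            push_neg at h0
            have hed : p.edges = [] := List.length_eq_zero_iff.mp (by rw [p.length_edges]; omega)
            rw [hed] at he
            simp at he
          have hrev : ¬ p.reverse.Nil := by
            rw [Walk.not_nil_iff_lt_length, Walk.length_reverse]
            exact hpl
          obtain ⟨c, h2, q, hq⟩ := Walk.not_nil_iff.mp hrev
          -- p.reverse = cons h2 q, h2 : G.Adj x c, q : G.Walk c b
          have hpath : (Walk.cons h2 q).IsPath := hq ▸ hp.reverse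
          have hxq : x ∉ q.support := (Walk.cons_isPath_iff _ _ |>.1 hpath).2
          have he' : s(x, b) ∈ (Walk.cons h2 q).edges := by
            rw [← hq, Walk.edges_reverse, List.mem_reverse]; exact he
          rw [Walk.edges_cons, List.mem_cons] at he'
          have hbc : b = c := by
            rcases he' with h' | h'
            · exact Sym2.congr_right.mp h'
            · exact absurd (Walk.fst_mem_support_of_mem_edges q h') hxq
          subst hbc
          -- q : G.Walk b b
          have hwt : (Walk.cons h p).wt ω = ω s(x, b) + ω s(x, b) + q.wt ω := by
            rw [wt_cons, ← wt_reverse ω p, hq, wt_cons]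
            ring
          have hoddq : Odd (q.wt ω) := by
            rw [hwt] at hodd
            rw [Nat.odd_iff] at hodd ⊢
            omega
          have hql : q.length ≤ n := by
            have h1 : (Walk.cons h2 q).length = p.length := by
              rw [← hq, Walk.length_reverse]
            simp only [Walk.length_cons] at h1 hl
            omega
          obtain ⟨y, c', hc', hoc', hle⟩ := ih q hql hoddq
          exact ⟨y, c', hc', hoc', hle.trans (by rw [hwt]; omega)⟩
        · exact ⟨x, Walk.cons h p, (Walk.cons_isCycle_iff p h).2 ⟨hp, he⟩, hodd, le_rfl⟩
      · -- p has a repeated vertex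
        have : ¬ p.support.Nodup := fun hn => hp (Walk.IsPath.mk' hn)
        obtain ⟨y, hdup⟩ := List.exists_duplicate_iff_not_nodup.2 this
        have hcount : 2 ≤ p.support.count y := List.duplicate_iff_two_le_count.mp hdup
        have hy : y ∈ p.support := hdup.mem
        set t1 := p.takeUntil y hy with ht1
        set rest := p.dropUntil y hy with hrest
        have hspec : t1.append rest = p := p.take_spec hy
        have hc1 : t1.support.count y = 1 := p.count_support_takeUntil_eq_one hy
        have hytail : y ∈ rest.support.tail := by
          by_contra hne
          have : p.support.count y = 1 := by
            rw [← hspec, Walk.support_append, List.count_append, hc1,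
              List.count_eq_zero_of_not_mem hne]
          omega
        have hrnil : ¬ rest.Nil := by
          rw [Walk.not_nil_iff_lt_length]
          have h1 : 0 < rest.support.tail.length := List.length_pos_iff.mpr (List.ne_nil_of_mem hytail)
          have h2 := rest.length_support
          rw [List.length_tail] at h1
          omega
        obtain ⟨d, h3, r, hr⟩ := Walk.not_nil_iff.mp hrnil
        -- rest = cons h3 r, h3 : G.Adj y d, r : G.Walk d x
        have hyr : y ∈ r.support := by
          rw [hr] at hytail
          simpa using hytail
        set C : G.Walk y y := Walk.cons h3 (r.takeUntil y hyr) with hC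
        set W2 : G.Walk x x := Walk.cons h (t1.append (r.dropUntil y hyr)) with hW2
        have hP : p.wt ω = t1.wt ω + ω s(y, d) + (r.takeUntil y hyr).wt ω
            + (r.dropUntil y hyr).wt ω := by
          conv_lhs => rw [← hspec]
          rw [wt_append, hr, wt_cons, ← wt_take_add_drop ω r hyr]
          ring
        have hwt : (Walk.cons h p).wt ω = C.wt ω + W2.wt ω := by
          rw [hC, hW2, wt_cons, wt_cons, wt_cons, wt_append, hP]
          ring
        have hlen : p.length = t1.length + 1 + r.length := by
          have := congrArg Walk.length hspec
          rw [Walk.length_append, hr, Walk.length_cons] at this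
          omega
        have hrtd : (r.takeUntil y hyr).length + (r.dropUntil y hyr).length = r.length := by
          have := congrArg Walk.length (r.take_spec hyr)
          rw [Walk.length_append] at this
          omega
        have hplen : p.length ≤ n := by
          simp only [Walk.length_cons] at hl; omega
        have hClen : C.length ≤ n := by
          rw [hC, Walk.length_cons]; omega
        have hW2len : W2.length ≤ n := by
          rw [hW2, Walk.length_cons, Walk.length_append]; omega
        have hsum : Odd (C.wt ω + W2.wt ω) := hwt ▸ hodd
        rw [Nat.odd_add] at hsum
        rcases Nat.even_or_odd (W2.wt ω) with h2 | h2
        · obtain ⟨y', c', hc', hoc', hle⟩ := ih C hClen (hsum.mpr h2)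
          exact ⟨y', c', hc', hoc', hle.trans (by rw [hwt]; omega)⟩
        · obtain ⟨y', c', hc', hoc', hle⟩ := ih W2 hW2len h2
          exact ⟨y', c', hc', hoc', hle.trans (by rw [hwt]; omega)⟩

/-- Parity of walk weights is determined by a vertex potential as long as every edge of
the walk satisfies the corresponding parity condition. -/
lemma walk_parity (g : V → ZMod 2) :
    ∀ {a b : V} (q : G.Walk a b),
      (∀ x y, G.Adj x y → s(x, y) ∈ q.edges → (ω s(x, y) : ZMod 2) = g x + g y) →
      ((q.wt ω : ℕ) : ZMod 2) = g a + g b := by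
  have h2 : (2 : ZMod 2) = 0 := by decide
  intro a b q
  induction q with
  | nil =>
    intro _
    simp only [Walk.wt, Walk.edges_nil, List.map_nil, List.sum_nil, Nat.cast_zero]
    exact (CharTwo.add_self_eq_zero _).symm
  | cons hadj p ih =>
    intro hgood
    rename_i x y z
    rw [wt_cons, Nat.cast_add, hgood _ _ hadj (by simp),
      ih (fun s t hst hm => hgood s t hst (by simp [hm]))]
    linear_combination (g y) * h2

end aux

/-- Let `k ≥ 5` and let `H` be a weighted graph with weights in `{3,4,5}`
and without cycles of odd total weight smaller than `2k+1`. Then for any vertex `u`, the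
weighted ball `N_ω^{k-3}[u]` is weighted bipartite. -/
theorem stmt6 {V : Type*} (k : ℕ) (hk : 5 ≤ k)
    (H : SimpleGraph V) (ω : Sym2 V → ℕ)
    (hω : ∀ e ∈ H.edgeSet, ω e = 3 ∨ ω e = 4 ∨ ω e = 5)
    (hfree : ∀ (v : V) (c : H.Walk v v), c.IsCycle → Odd (c.wt ω) → 2 * k + 1 ≤ c.wt ω)
    (u : V) :
    weightedBipartiteOn H ω (wBall H ω u (k - 3)) := by
  classical
  intro v c hc hsup hodd
  have h2 : (2 : ZMod 2) = 0 := by decide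
  have hex : ∀ x : V, x ∈ wBall H ω u (k - 3) →
      ∃ w : H.Walk u x, w.IsPath ∧ w.wt ω ≤ k - 3 := fun x hx => hx
  choose P hP1 hP2 using hex
  set g : V → ZMod 2 := fun x =>
    if h : x ∈ wBall H ω u (k - 3) then (((P x h).wt ω : ℕ) : ZMod 2) else 0 with hg
  have key : ∀ x y, H.Adj x y → s(x, y) ∈ c.edges →
      (ω s(x, y) : ZMod 2) = g x + g y := by
    intro x y hadj he
    have hx : x ∈ wBall H ω u (k - 3) := hsup x (c.fst_mem_support_of_mem_edges he)
    have hy : y ∈ wBall H ω u (k - 3) := hsup y (c.snd_mem_support_of_mem_edges he)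
    have hgx : g x = (((P x hx).wt ω : ℕ) : ZMod 2) := by rw [hg]; exact dif_pos hx
    have hgy : g y = (((P y hy).wt ω : ℕ) : ZMod 2) := by rw [hg]; exact dif_pos hy
    set a := (P x hx).wt ω with ha
    set b := (P y hy).wt ω with hb
    by_contra hne
    have hoddsum : Odd (a + ω s(x, y) + b) := by
      rw [Nat.odd_iff]
      by_contra hev
      apply hne
      have h0 : ((a + ω s(x, y) + b : ℕ) : ZMod 2) = 0 := by
        rw [ZMod.natCast_eq_zero_iff]
        omega
      push_cast at h0
      rw [hgx, hgy]
      linear_combination h0 - ((a : ZMod 2) + (b : ZMod 2)) * h2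
    -- build an odd closed walk of small weight
    set W : H.Walk u u := (P x hx).append (Walk.cons hadj (P y hy).reverse) with hW
    have hWwt : W.wt ω = a + ω s(x, y) + b := by
      rw [hW, wt_append, wt_cons, wt_reverse]
      ring
    obtain ⟨y', c', hc', hoc', hle⟩ :=
      exists_odd_cycle ω W.length W le_rfl (by rw [hWwt]; exact hoddsum)
    have hbig := hfree y' c' hc' hoc'
    have hωe : ω s(x, y) ≤ 5 := by
      rcases hω s(x, y) (H.mem_edgeSet.mpr hadj) with h' | h' | h' <;> omega
    have h1 := hP2 x hx
    have h3 := hP2 y hy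
    rw [hWwt] at hle
    omega
  have := walk_parity ω g c key
  have hzero : ((c.wt ω : ℕ) : ZMod 2) = 0 := by
    rw [this]
    linear_combination (g v) * h2
  rw [ZMod.natCast_eq_zero_iff] at hzero
  rw [Nat.odd_iff] at hodd
  omega
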